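/- Let k be a unital ring and n ≥ 2 an integer. Let J be a Grothendieck topology on RingCatᵒᵖ such that the sieve on the object corresponding to kⁿ generated by the morphisms opposite to the projections πᵢ : kⁿ → k (i = 1,…,n) is J-covering. Let F be a presheaf of sets on RingCatᵒᵖ (equivalently, a functor RingCat → Set) that is a sheaf for J. Then for every ring R equipped with a unital ring homomorphism k → R, the map F(Mₙ(R)) → F(0) induced by applying F to the unique ring homomorphism Mₙ(R) → 0 is a bijection. -/

import Mathlib

universe u

open CategoryTheory Opposite

/-- The unique ring homomorphism from a ring to the trivial (one-element) ring. -/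
def toTrivialRingHom (R : Type u) [Ring R] : R →+* PUnit.{u + 1} where
  toFun _ := PUnit.unit
  map_one' := rfl
  map_mul' _ _ := rfl
  map_zero' := rfl
  map_add' _ _ := rfl

lemma diag_single_eq_std {n : ℕ} {R : Type u} [Ring R] (i : Fin n) (c : R) :
    Matrix.diagonal (Pi.single i c) = Matrix.single i i c := by
  ext a b
  by_cases h : a = b
  · subst h
    by_cases h2 : i = a <;> simp [Matrix.single, Pi.single_apply, h2, eq_comm]
  · simp only [Matrix.diagonal_apply_ne _ h, Matrix.single, Matrix.of_apply]
    rw [eq_comm, if_neg]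
    rintro ⟨rfl, rfl⟩; exact h rfl

theorem stmt_4 (k : Type u) [Ring k] (n : ℕ) (hn : 2 ≤ n)
    (J : GrothendieckTopology RingCat.{u}ᵒᵖ)
    (hJ : Sieve.generate
        (Presieve.ofArrows (fun _ : Fin n => op (RingCat.of k))
          (fun i => (RingCat.ofHom (Pi.evalRingHom (fun _ : Fin n => k) i)).op)) ∈
      J (op (RingCat.of (Fin n → k))))
    (F : (RingCat.{u}ᵒᵖ)ᵒᵖ ⥤ Type u) (hF : Presieve.IsSheaf J F)
    (R : Type u) [Ring R] (φ : k →+* R) :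
    Function.Bijective
      (F.map ((RingCat.ofHom (toTrivialRingHom (Matrix (Fin n) (Fin n) R))).op.op)) := by
  set Mn := Matrix (Fin n) (Fin n) R with hMn
  -- the diagonal homomorphism kⁿ → Mₙ(R)
  let d : (Fin n → k) →+* Mn :=
    (Matrix.diagonalRingHom (Fin n) R).comp
      (Pi.ringHom (fun i => φ.comp (Pi.evalRingHom (fun _ : Fin n => k) i)))
  let X : RingCat.{u}ᵒᵖ := op (RingCat.of Mn)
  let Z : RingCat.{u}ᵒᵖ := op (RingCat.of PUnit.{u+1})
  let fop : Z ⟶ X := (RingCat.ofHom (toTrivialRingHom Mn)).op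
  let dop : X ⟶ op (RingCat.of (Fin n → k)) := (RingCat.ofHom d).op
  -- pullback of the covering sieve is covering
  have hpull := J.pullback_stable dop hJ
  -- homs into Z are all equal
  have hsub : ∀ (W : RingCat.{u}ᵒᵖ) (a b : W ⟶ Z), a = b := by
    intro W a b
    apply Quiver.Hom.unop_inj
    refine RingCat.hom_ext (RingHom.ext fun x => ?_)
    have hx : x = 1 := Subsingleton.elim (α := PUnit.{u+1}) x 1
    rw [hx, map_one, map_one]
  -- the pulled-back sieve is contained in the sieve generated by fop
  have hle : (Sieve.generate
        (Presieve.ofArrows (fun _ : Fin n => op (RingCat.of k))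
          (fun i => (RingCat.ofHom (Pi.evalRingHom (fun _ : Fin n => k) i)).op))).pullback dop ≤
      Sieve.generate (Presieve.singleton fop) := by
    rintro Y0 g ⟨W, h, f, hf, comm⟩
    obtain ⟨i⟩ := hf
    -- ring-level consequence
    have key : ∀ a : Fin n → k,
        g.unop (Matrix.diagonal (fun m => φ (a m))) = h.unop ((Pi.evalRingHom (fun _ : Fin n => k) i) a) := by
      intro a
      have := congrArg Quiver.Hom.unop comm
      simp only [unop_comp] at this
      exact (RingHom.congr_fun (congrArg RingCat.Hom.hom this) a).symm
    -- pick j ≠ i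
    have h2 : 0 < n := by omega
    haveI : Nontrivial (Fin n) :=
      ⟨⟨⟨0, by omega⟩, ⟨1, by omega⟩, by simp [Fin.ext_iff]⟩⟩
    obtain ⟨j, hij⟩ := exists_ne i
    -- evaluate at Pi.single i 1 and Pi.single j 1
    have hdiag : ∀ (m : Fin n),
        (Matrix.diagonal fun l => φ ((Pi.single m 1 : Fin n → k) l)) =
          Matrix.single m m (1:R) := by
      intro m
      have hfun : (fun l => φ ((Pi.single m 1 : Fin n → k) l)) = Pi.single m (1:R) := by
        funext l
        by_cases hl : l = m <;> simp [Pi.single_apply, hl]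
      rw [hfun, diag_single_eq_std]
    have h1 : g.unop (Matrix.single i i (1:R)) = 1 := by
      have e := key (Pi.single i 1)
      rw [hdiag i] at e
      simpa using e
    have h0 : g.unop (Matrix.single j j (1:R)) = 0 := by
      have e := key (Pi.single j 1)
      rw [hdiag j] at e
      simpa [Pi.single_apply, hij] using e
    -- conjugation trick: E i i = E i j * E j j * E j i
    have hconj : Matrix.single i i (1:R) =
        Matrix.single i j 1 * Matrix.single j j 1 * Matrix.single j i 1 := by
      rw [Matrix.single_mul_single_same, Matrix.single_mul_single_same]
      norm_num
    have h10 : (1 : ↑(unop Y0)) = 0 := by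
      calc (1 : ↑(unop Y0)) = g.unop (Matrix.single i i (1:R)) := h1.symm
        _ = g.unop (Matrix.single i j 1) * g.unop (Matrix.single j j 1)
              * g.unop (Matrix.single j i 1) := by rw [hconj, map_mul, map_mul]
        _ = 0 := by rw [h0, mul_zero, zero_mul]
    haveI : Subsingleton ↑(unop Y0) := subsingleton_of_zero_eq_one h10.symm
    -- build the factorization through Z
    let u : PUnit.{u+1} →+* ↑(unop Y0) :=
      { toFun := fun _ => 1
        map_one' := rfl
        map_mul' := fun _ _ => Subsingleton.elim _ _
        map_zero' := Subsingleton.elim _ _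
        map_add' := fun _ _ => Subsingleton.elim _ _ }
    refine ⟨Z, (RingCat.ofHom u).op, fop, Presieve.singleton.mk, ?_⟩
    apply Quiver.Hom.unop_inj
    ext x
    exact Subsingleton.elim _ _
  have hcov : Sieve.generate (Presieve.singleton fop) ∈ J X :=
    J.superset_covering hle hpull
  have hs : Presieve.IsSheafFor F (Presieve.singleton fop) :=
    (Presieve.isSheafFor_iff_generate _).mpr (hF _ hcov)
  constructor
  · intro a b hab
    let x : Presieve.FamilyOfElements F (Presieve.singleton fop) := fun W g _ => F.map g.op a
    have hx : x.Compatible := by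
      intro W₁ W₂ V g₁ g₂ f₁ f₂ h₁ h₂ hcomm
      cases h₁; cases h₂
      obtain rfl := hsub _ g₁ g₂
      rfl
    exact hs.isSeparatedFor x a b (fun W g hg => rfl)
      (by rintro W g ⟨⟩; exact hab.symm)
  · intro y
    let x : Presieve.FamilyOfElements F (Presieve.singleton fop) := fun W g hg => by
      cases hg; exact y
    have hx : x.Compatible := by
      intro W₁ W₂ V g₁ g₂ f₁ f₂ h₁ h₂ hcomm
      cases h₁; cases h₂
      obtain rfl := hsub _ g₁ g₂
      rfl
    obtain ⟨a, ha, -⟩ := hs x hx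
    exact ⟨a, ha fop Presieve.singleton.mk⟩
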